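/- Let G be a finite group with conjugacy classes C₁,…,Cₙ, ℓᵢ = |Cᵢ|, and structure constant matrices Mⱼ = (a_{klj}) of the center of the group algebra. Define p_{ij} = Tr(MᵢMⱼ). Then p_{ij} = ∑_{t=1}^n (1/ℓ_t)·ℓ_{i j t t'}, where ℓ_{ijtt'} = #{(a,b,c,d) ∈ Cᵢ×Cⱼ×C_t×C_{t'} : abcd = 1}. -/

import Mathlib

open scoped Classical

/-- `ellCount G x` is the number of tuples `(g₁,…,g_r)` with `g_j` in the conjugacy class of
`x j` and `g₁ ⋯ g_r = 1`. -/
noncomputable def ellCount (G : Type*) [Group G] {r : ℕ} (x : Fin r → G) : ℕ :=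
  Nat.card {g : Fin r → G // (∀ j, IsConj (x j) (g j)) ∧ (List.ofFn g).prod = 1}

/-- The class sum of the conjugacy class of `x` in the group algebra `ℚ[G]`. -/
noncomputable def classSum (G : Type*) [Group G] [Fintype G] (x : G) : MonoidAlgebra ℚ G :=
  ∑ g : G, if IsConj x g then MonoidAlgebra.single g (1 : ℚ) else 0

section Helpers

variable {G : Type*} [Group G] [Fintype G]

lemma classSum_apply (x g : G) : (classSum G x).coeff g = if IsConj x g then 1 else 0 := by
  rw [classSum, MonoidAlgebra.coeff_sum, Finsupp.finset_sum_apply]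
  have : ∀ u : G, (if IsConj x u then MonoidAlgebra.single u (1:ℚ) else 0).coeff g
      = if u = g then (if IsConj x u then (1:ℚ) else 0) else 0 := by
    intro u
    split_ifs with h1 h2 h2 <;> simp_all [MonoidAlgebra.coeff_single, Finsupp.single_apply]
  rw [Finset.sum_congr rfl (fun u _ => this u), Finset.sum_ite_eq' Finset.univ g]
  simp

lemma classSum_mul (x y : G) :
    classSum G x * classSum G y =
      ∑ p : G × G, if IsConj x p.1 ∧ IsConj y p.2
        then MonoidAlgebra.single (p.1 * p.2) (1:ℚ) else 0 := by
  rw [classSum, classSum, Finset.sum_mul_sum, ← Fintype.sum_prod_type']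
  refine Fintype.sum_congr _ _ fun p => ?_
  split_ifs with h1 h2 h3 h3 <;>
    simp_all [MonoidAlgebra.single_mul_single]

lemma classSum_comm (x y : G) :
    classSum G x * classSum G y = classSum G y * classSum G x := by
  rw [classSum_mul, classSum_mul]
  refine Fintype.sum_equiv ⟨fun p => (p.1 * p.2 * p.1⁻¹, p.1),
    fun q => (q.2, q.2⁻¹ * q.1 * q.2), fun p => by simp [mul_assoc], fun q => by
      simp [mul_assoc]⟩ _ _ fun p => ?_
  simp only [Equiv.coe_fn_mk]
  have hconj : IsConj y (p.1 * p.2 * p.1⁻¹) ↔ IsConj y p.2 := by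
    constructor
    · intro h; exact h.trans (isConj_iff.2 ⟨p.1⁻¹, by group⟩)
    · intro h; exact h.trans (isConj_iff.2 ⟨p.1, by group⟩)
  have hmul : p.1 * p.2 * p.1⁻¹ * p.1 = p.1 * p.2 := by group
  rw [hmul]
  exact (if_congr (by rw [hconj]; tauto) rfl rfl).symm

lemma single_mul_classSum (h : G) (x : G) :
    MonoidAlgebra.single h (1:ℚ) * classSum G x = classSum G x * MonoidAlgebra.single h (1:ℚ) := by
  rw [classSum, Finset.mul_sum, Finset.sum_mul]
  refine Fintype.sum_equiv ⟨fun u => h * u * h⁻¹, fun u => h⁻¹ * u * h,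
    fun u => by group, fun u => by group⟩ _ _ fun u => ?_
  simp only [Equiv.coe_fn_mk]
  have hconj : IsConj x (h * u * h⁻¹) ↔ IsConj x u := by
    constructor
    · intro hh; exact hh.trans (isConj_iff.2 ⟨h⁻¹, by group⟩)
    · intro hh; exact hh.trans (isConj_iff.2 ⟨h, by group⟩)
  by_cases hc : IsConj x u
  · rw [if_pos hc, if_pos (hconj.2 hc), MonoidAlgebra.single_mul_single,
      MonoidAlgebra.single_mul_single]
    have : h * u * h⁻¹ * h = h * u := by group
    rw [this]
  · rw [if_neg hc, if_neg (fun hh => hc (hconj.1 hh)), zero_mul, mul_zero]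

lemma conj_apply_eq {F : MonoidAlgebra ℚ G}
    (hF : ∀ h : G, MonoidAlgebra.single h (1:ℚ) * F = F * MonoidAlgebra.single h (1:ℚ))
    (h g : G) : F.coeff (h * g * h⁻¹) = F.coeff g := by
  have := congrArg (fun f : MonoidAlgebra ℚ G => f.coeff (h * g)) (hF h)
  simp only [MonoidAlgebra.coeff_single_mul_apply, MonoidAlgebra.coeff_mul_single_apply, one_mul, mul_one,
    inv_mul_cancel_left] at this
  exact this.symm

lemma sum_single_apply {ι : Type*} [Fintype ι] (P : ι → Prop) (m : ι → G) (g : G) :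
    ((∑ i : ι, if P i then MonoidAlgebra.single (m i) (1:ℚ) else 0).coeff g)
      = ((Finset.univ.filter (fun i => P i ∧ m i = g)).card : ℚ) := by
  rw [MonoidAlgebra.coeff_sum, Finsupp.finset_sum_apply, Finset.card_filter, Nat.cast_sum]
  refine Finset.sum_congr rfl fun i _ => ?_
  by_cases hP : P i
  · by_cases hm : m i = g
    · simp [hP, hm, MonoidAlgebra.coeff_single, Finsupp.single_apply]
    · simp [hP, hm, MonoidAlgebra.coeff_single, Finsupp.single_apply]
  · simp [hP]

lemma classSum_mul_mul (x y z : G) :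
    classSum G x * classSum G y * classSum G z =
      ∑ q : (G × G) × G, if IsConj x q.1.1 ∧ IsConj y q.1.2 ∧ IsConj z q.2
        then MonoidAlgebra.single (q.1.1 * q.1.2 * q.2) (1:ℚ) else 0 := by
  rw [classSum_mul, classSum, Finset.sum_mul_sum, ← Fintype.sum_prod_type']
  refine Fintype.sum_congr _ _ fun q => ?_
  have : ∀ (p : G × G) (c : G),
      ((if IsConj x p.1 ∧ IsConj y p.2 then MonoidAlgebra.single (p.1 * p.2) (1:ℚ) else 0) *
        (if IsConj z c then MonoidAlgebra.single c (1:ℚ) else 0))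
      = if (IsConj x p.1 ∧ IsConj y p.2) ∧ IsConj z c
          then MonoidAlgebra.single (p.1 * p.2 * c) (1:ℚ) else 0 := by
    intro p c
    by_cases hA : IsConj x p.1 ∧ IsConj y p.2 <;> by_cases hB : IsConj z c
    · rw [if_pos hA, if_pos hB, if_pos ⟨hA, hB⟩, MonoidAlgebra.single_mul_single, one_mul]
    · rw [if_neg hB, mul_zero, if_neg (fun h => hB h.2)]
    · rw [if_neg hA, zero_mul, if_neg (fun h => hA h.1)]
    · rw [if_neg hA, zero_mul, if_neg (fun h => hA h.1)]
  rw [this q.1 q.2]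
  exact if_congr (by tauto) rfl rfl

lemma classSum_mul_mul_apply (x y z : G) (g : G) :
    (classSum G x * classSum G y * classSum G z).coeff g =
      ((Finset.univ.filter (fun q : (G × G) × G =>
        (IsConj x q.1.1 ∧ IsConj y q.1.2 ∧ IsConj z q.2) ∧ q.1.1 * q.1.2 * q.2 = g)).card : ℚ) := by
  rw [classSum_mul_mul, MonoidAlgebra.coeff_sum, Finsupp.finset_sum_apply, Finset.card_filter, Nat.cast_sum]
  refine Finset.sum_congr rfl fun q _ => ?_
  by_cases hP : IsConj x q.1.1 ∧ IsConj y q.1.2 ∧ IsConj z q.2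
  · by_cases hm : q.1.1 * q.1.2 * q.2 = g
    · rw [hm, if_pos hP, if_pos ⟨hP, rfl⟩]
      exact Finsupp.single_eq_same
    · rw [if_pos hP, if_neg (fun h => hm h.2)]
      exact Finsupp.single_eq_of_ne (Ne.symm hm)
  · rw [if_neg hP, if_neg (fun h => hP h.1)]
    rfl

lemma isConj_inv_iff {a b : G} : IsConj a⁻¹ b⁻¹ ↔ IsConj a b := by
  constructor <;> intro h <;> obtain ⟨c, hc⟩ := isConj_iff.1 h
  · exact isConj_iff.2 ⟨c, inv_injective (by rw [conj_inv, hc])⟩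
  · exact isConj_iff.2 ⟨c, by rw [← hc, conj_inv]⟩

lemma ellCount_eq_card (u v w : G) :
    ellCount G ![u, v, w, w⁻¹] =
      (Finset.univ.filter (fun q : (G × G) × G =>
        (IsConj u q.1.1 ∧ IsConj v q.1.2 ∧ IsConj w q.2) ∧
          IsConj w (q.1.1 * q.1.2 * q.2))).card := by
  have hprod4 : ∀ g : Fin 4 → G, (List.ofFn g).prod = g 0 * g 1 * g 2 * g 3 := by
    intro g
    show g 0 * (g 1 * (g 2 * (g 3 * 1))) = _
    group
  rw [ellCount, Nat.card_eq_fintype_card, ← Fintype.card_subtype]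
  refine Fintype.card_congr ⟨fun g => ⟨((g.1 0, g.1 1), g.1 2), ?_⟩,
    fun q => ⟨![q.1.1.1, q.1.1.2, q.1.2, (q.1.1.1 * q.1.1.2 * q.1.2)⁻¹], ?_, ?_⟩, ?_, ?_⟩
  · obtain ⟨g, hconj, hp⟩ := g
    have h0 := hconj 0; have h1 := hconj 1; have h2 := hconj 2; have h3 := hconj 3
    simp only [Matrix.cons_val_zero, Matrix.cons_val_one, Matrix.head_cons] at h0 h1
    have h2' : IsConj w (g 2) := by simpa using h2
    have h3' : IsConj w⁻¹ (g 3) := by simpa using h3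
    rw [hprod4] at hp
    have hg3 : g 3 = (g 0 * g 1 * g 2)⁻¹ := (inv_eq_of_mul_eq_one_right hp).symm
    refine ⟨⟨h0, h1, h2'⟩, ?_⟩
    rw [hg3] at h3'
    rw [← isConj_inv_iff]
    simpa using h3'
  · intro j
    fin_cases j
    · simpa using q.2.1.1
    · simpa using q.2.1.2.1
    · simpa using q.2.1.2.2
    · simpa using isConj_inv_iff.2 q.2.2
  · rw [hprod4]
    simp only [show ∀ a b c : G, (![a,b,c,(a*b*c)⁻¹] : Fin 4 → G) 0 = a from fun _ _ _ => rfl]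
    show q.1.1.1 * _ * _ * _ = 1
    rw [show (![q.1.1.1, q.1.1.2, q.1.2, (q.1.1.1 * q.1.1.2 * q.1.2)⁻¹] : Fin 4 → G) 1
        = q.1.1.2 from rfl,
      show (![q.1.1.1, q.1.1.2, q.1.2, (q.1.1.1 * q.1.1.2 * q.1.2)⁻¹] : Fin 4 → G) 2
        = q.1.2 from rfl,
      show (![q.1.1.1, q.1.1.2, q.1.2, (q.1.1.1 * q.1.1.2 * q.1.2)⁻¹] : Fin 4 → G) 3
        = (q.1.1.1 * q.1.1.2 * q.1.2)⁻¹ from rfl]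
    group
  · intro g
    ext j
    obtain ⟨g, hconj, hp⟩ := g
    rw [hprod4] at hp
    have hg3 : g 3 = (g 0 * g 1 * g 2)⁻¹ := (inv_eq_of_mul_eq_one_right hp).symm
    fin_cases j <;> simp [hg3]
  · intro q
    ext <;> rfl

end Helpers

/-- for the structure-constant matrices `Mⱼ = (a_{klj})` of the class algebra,
`p_{ij} = Tr(MᵢMⱼ) = ∑_t (1/ℓ_t) ℓ_{ijtt'}`. -/
theorem trace_structure_matrices (G : Type*) [Group G] [Fintype G] {n : ℕ} (x : Fin n → G)
    (hdist : ∀ i j, i ≠ j → ¬ IsConj (x i) (x j))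
    (hexh : ∀ g : G, ∃ i, IsConj (x i) g)
    (a : Fin n → Fin n → Fin n → ℚ)
    (ha : ∀ i j, classSum G (x i) * classSum G (x j) =
      ∑ l : Fin n, a l i j • classSum G (x l))
    (M : Fin n → Matrix (Fin n) (Fin n) ℚ)
    (hM : ∀ j, M j = Matrix.of fun k l => a k l j) :
    ∀ i j, Matrix.trace (M i * M j) =
      ∑ t : Fin n, (1 / (Nat.card {y : G // IsConj (x t) y} : ℚ)) *
        (ellCount G ![x i, x j, x t, (x t)⁻¹] : ℚ) := by
  intro i j
  -- coefficient extraction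
  have hcoeff : ∀ (b : Fin n → ℚ) (k : Fin n),
      (∑ l : Fin n, b l • classSum G (x l)).coeff (x k) = b k := by
    intro b k
    rw [MonoidAlgebra.coeff_sum, Finsupp.finset_sum_apply, Finset.sum_eq_single k]
    · rw [MonoidAlgebra.coeff_smul, Finsupp.smul_apply, classSum_apply, if_pos (IsConj.refl _), smul_eq_mul, mul_one]
    · intro l _ hl
      rw [MonoidAlgebra.coeff_smul, Finsupp.smul_apply, classSum_apply, if_neg (hdist l k hl), smul_eq_mul, mul_zero]
    · intro h; exact absurd (Finset.mem_univ k) h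
  -- symmetry of structure constants
  have hsymm : ∀ p q l, a l p q = a l q p := by
    intro p q l
    rw [← hcoeff (fun l => a l p q) l, ← hcoeff (fun l => a l q p) l,
      ← ha p q, ← ha q p, classSum_comm]
  -- expansion of the triple coefficient
  have hexp : ∀ t, (classSum G (x i) * classSum G (x j) * classSum G (x t)).coeff (x t)
      = ∑ m, a m j t * a t i m := by
    intro t
    rw [mul_assoc, ha j t, Finset.mul_sum]
    rw [Finset.sum_congr rfl fun m _ => mul_smul_comm (a m j t) (classSum G (x i))
      (classSum G (x m))]
    rw [MonoidAlgebra.coeff_sum, Finsupp.finset_sum_apply]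
    refine Finset.sum_congr rfl fun m _ => ?_
    rw [MonoidAlgebra.coeff_smul, Finsupp.smul_apply, ha i m, hcoeff (fun k => a k i m) t, smul_eq_mul]
  -- conjugation invariance of the triple coefficient
  have hF : ∀ t w, IsConj (x t) w →
      (classSum G (x i) * classSum G (x j) * classSum G (x t)).coeff w
        = (classSum G (x i) * classSum G (x j) * classSum G (x t)).coeff (x t) := by
    intro t w hw
    obtain ⟨c, hc⟩ := isConj_iff.1 hw
    set A := classSum G (x i); set B := classSum G (x j); set C := classSum G (x t)
    have hcent : ∀ h : G, MonoidAlgebra.single h (1:ℚ) * (A * B * C)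
        = (A * B * C) * MonoidAlgebra.single h (1:ℚ) := by
      intro h
      rw [← mul_assoc (MonoidAlgebra.single h (1:ℚ)) (A*B) C,
        ← mul_assoc (MonoidAlgebra.single h (1:ℚ)) A B,
        single_mul_classSum h (x i),
        mul_assoc A (MonoidAlgebra.single h (1:ℚ)) B, single_mul_classSum h (x j),
        ← mul_assoc A B (MonoidAlgebra.single h (1:ℚ)),
        mul_assoc (A*B) (MonoidAlgebra.single h (1:ℚ)) C, single_mul_classSum h (x t),
        ← mul_assoc (A*B) C (MonoidAlgebra.single h (1:ℚ))]
    rw [← hc]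
    exact conj_apply_eq hcent c (x t)
  -- the size of the class
  have hl : ∀ t : Fin n, (Nat.card {y : G // IsConj (x t) y})
      = (Finset.univ.filter (fun y => IsConj (x t) y)).card := by
    intro t; rw [Nat.card_eq_fintype_card, Fintype.card_subtype]
  have hlpos : ∀ t : Fin n, 0 < (Finset.univ.filter (fun y => IsConj (x t) y)).card := by
    intro t
    exact Finset.card_pos.2 ⟨x t, Finset.mem_filter.2 ⟨Finset.mem_univ _, IsConj.refl _⟩⟩
  -- the key counting identity
  have hL : ∀ t : Fin n, ((ellCount G ![x i, x j, x t, (x t)⁻¹] : ℚ))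
      = ((Finset.univ.filter (fun y => IsConj (x t) y)).card : ℚ) *
        (classSum G (x i) * classSum G (x j) * classSum G (x t)).coeff (x t) := by
    intro t
    rw [ellCount_eq_card]
    have hmap : ∀ q ∈ Finset.univ.filter (fun q : (G × G) × G =>
        (IsConj (x i) q.1.1 ∧ IsConj (x j) q.1.2 ∧ IsConj (x t) q.2) ∧
          IsConj (x t) (q.1.1 * q.1.2 * q.2)),
        q.1.1 * q.1.2 * q.2 ∈ Finset.univ.filter (fun y => IsConj (x t) y) := by
      intro q hq
      exact Finset.mem_filter.2 ⟨Finset.mem_univ _, (Finset.mem_filter.1 hq).2.2⟩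
    rw [Finset.card_eq_sum_card_fiberwise hmap, Nat.cast_sum]
    have hfib : ∀ w ∈ Finset.univ.filter (fun y => IsConj (x t) y),
        (((Finset.univ.filter (fun q : (G × G) × G =>
          (IsConj (x i) q.1.1 ∧ IsConj (x j) q.1.2 ∧ IsConj (x t) q.2) ∧
            IsConj (x t) (q.1.1 * q.1.2 * q.2))).filter
              (fun q => q.1.1 * q.1.2 * q.2 = w)).card : ℚ)
        = (classSum G (x i) * classSum G (x j) * classSum G (x t)).coeff (x t) := by
      intro w hw
      have hw' : IsConj (x t) w := (Finset.mem_filter.1 hw).2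
      rw [← hF t w hw', classSum_mul_mul_apply]
      congr 1
      rw [Finset.filter_filter]
      congr 1
      ext q
      simp only [Finset.mem_filter, Finset.mem_univ, true_and]
      constructor
      · rintro ⟨⟨h1, h2⟩, h3⟩; exact ⟨h1, h3⟩
      · rintro ⟨h1, h3⟩; exact ⟨⟨h1, h3 ▸ hw'⟩, h3⟩
    rw [Finset.sum_congr rfl hfib, Finset.sum_const, nsmul_eq_mul]
  -- put everything together
  have htrace : Matrix.trace (M i * M j) = ∑ t : Fin n, ∑ m : Fin n, a t m i * a m t j := by
    rw [Matrix.trace]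
    refine Finset.sum_congr rfl fun t _ => ?_
    rw [Matrix.diag_apply, Matrix.mul_apply]
    refine Finset.sum_congr rfl fun m _ => ?_
    rw [hM i, hM j]; rfl
  rw [htrace]
  refine Finset.sum_congr rfl fun t _ => ?_
  rw [hL t, hl t]
  rw [← mul_assoc, one_div, inv_mul_cancel₀ (by exact_mod_cast (hlpos t).ne'), one_mul]
  rw [hexp t]
  refine Finset.sum_congr rfl fun m _ => ?_
  rw [hsymm j t m, hsymm i m t, mul_comm]
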